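/- Let d ≥ 1, let a < b be integers, let Λ = ℤ^d ∩ [a,b]^d, let Λ₀ ⊆ Λ, and let μ > 0. Then ∑_{x ∈ Λ₀} ∑_{y ∈ Λ∖Λ₀} e^{−μ|x−y|} ≤ |∂Λ₀| · ((1+e^{−μ})/(1−e^{−μ}))^{2d}, where |∂Λ₀| is the cardinality of the boundary ∂Λ₀. (In particular, the double sum is bounded by |∂Λ₀| · S², where S = ∑_{v ∈ ℤ^d} e^{−μ|v|} = ((1+e^{−μ})/(1−e^{−μ}))^d.) -/

import Mathlib

/-- The ℓ¹-distance on `ℤ^d`. -/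
def l1dist {d : ℕ} (x y : Fin d → ℤ) : ℤ := ∑ i, |x i - y i|

/-- The box `Λ = ℤ^d ∩ [a,b]^d` as a finite set. -/
noncomputable def latticeBox (d : ℕ) (a b : ℤ) : Finset (Fin d → ℤ) :=
  Fintype.piFinset fun _ => Finset.Icc a b

/-- The boundary `∂Λ₀` of a subregion `Λ₀` of the box. -/
noncomputable def latticeBoundary (d : ℕ) (a b : ℤ) (Λ₀ : Finset (Fin d → ℤ)) : Finset (Fin d → ℤ) :=
  Λ₀.filter fun z => ∃ w ∈ latticeBox d a b \ Λ₀, l1dist z w = 1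

lemma l1dist_nonneg {d : ℕ} (x y : Fin d → ℤ) : 0 ≤ l1dist x y :=
  Finset.sum_nonneg fun _ _ => abs_nonneg _

lemma l1dist_self {d : ℕ} (x : Fin d → ℤ) : l1dist x x = 0 := by
  simp [l1dist]

lemma l1dist_comm {d : ℕ} (x y : Fin d → ℤ) : l1dist x y = l1dist y x := by
  simp [l1dist, abs_sub_comm]

lemma l1dist_eq_zero {d : ℕ} {x y : Fin d → ℤ} (h : l1dist x y = 0) : x = y := by
  funext i
  have := (Finset.sum_eq_zero_iff_of_nonneg (fun i _ => abs_nonneg (x i - y i))).1 h i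
    (Finset.mem_univ i)
  have := abs_eq_zero.1 this
  omega

lemma l1dist_triangle {d : ℕ} (x w z : Fin d → ℤ) :
    l1dist x z ≤ l1dist x w + l1dist w z := by
  rw [l1dist, l1dist, l1dist, ← Finset.sum_add_distrib]
  exact Finset.sum_le_sum fun i _ => abs_sub_le _ _ _

lemma exists_boundary {d : ℕ} {a b : ℤ} {Λ₀ : Finset (Fin d → ℤ)}
    (hΛ₀ : Λ₀ ⊆ latticeBox d a b) :
    ∀ n : ℕ, ∀ x ∈ Λ₀, ∀ y ∈ latticeBox d a b \ Λ₀, l1dist x y ≤ (n : ℤ) →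
    ∃ z ∈ latticeBoundary d a b Λ₀, l1dist x z + l1dist z y ≤ l1dist x y := by
  intro n
  induction n with
  | zero =>
    intro x hx y hy hn
    have h0 : l1dist x y = 0 := le_antisymm hn (l1dist_nonneg x y)
    have : x = y := l1dist_eq_zero h0
    subst this
    exact absurd hx (Finset.mem_sdiff.1 hy).2
  | succ n ih =>
    intro x hx y hy hn
    by_cases hle : l1dist x y ≤ (n : ℤ)
    · exact ih x hx y hy hle
    -- x ≠ y
    have hxy : x ≠ y := by
      rintro rfl
      exact (Finset.mem_sdiff.1 hy).2 hx
    have hxne : ∃ i, x i ≠ y i := by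
      by_contra h
      push_neg at h
      exact hxy (funext h)
    obtain ⟨i, hi⟩ := hxne
    set δ : ℤ := if x i < y i then 1 else -1 with hδ
    set x' : Fin d → ℤ := Function.update x i (x i + δ) with hx'
    have hxbox := hΛ₀ hx
    have hybox := (Finset.mem_sdiff.1 hy).1
    have hxi : x i ∈ Finset.Icc a b := (Fintype.mem_piFinset.1 hxbox) i
    have hyi : y i ∈ Finset.Icc a b := (Fintype.mem_piFinset.1 hybox) i
    have hbounds : a ≤ x i ∧ x i ≤ b ∧ a ≤ y i ∧ y i ≤ b := by
      simp only [Finset.mem_Icc] at hxi hyi; exact ⟨hxi.1, hxi.2, hyi.1, hyi.2⟩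
    have hx'box : x' ∈ latticeBox d a b := by
      rw [latticeBox, Fintype.mem_piFinset]
      intro j
      by_cases hj : j = i
      · subst hj
        simp only [hx', Function.update_self, Finset.mem_Icc, hδ]
        rcases lt_or_gt_of_ne (sub_ne_zero.mp (fun h => hi (by omega)) : x j ≠ y j) with h | h
        · simp only [if_pos h]; omega
        · simp only [if_neg (not_lt.2 h.le)]; omega
      · rw [hx', Function.update_of_ne hj]
        exact (Fintype.mem_piFinset.1 hxbox) j
    have hcoord : |x i + δ - y i| = |x i - y i| - 1 := by
      rcases lt_or_gt_of_ne hi with h | h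
      · rw [hδ, if_pos h, abs_of_nonpos (by omega), abs_of_neg (by omega : x i - y i < 0)]
        ring
      · rw [hδ, if_neg (not_lt.2 h.le), abs_of_nonneg (by omega), abs_of_pos
          (by omega : 0 < x i - y i)]
        ring
    have hstep : l1dist x x' = 1 := by
      rw [l1dist]
      rw [Finset.sum_eq_single i]
      · simp [hx', hδ]
        rcases lt_or_gt_of_ne hi with h | h
        · simp [if_pos h]
        · simp [if_neg (not_lt.2 h.le)]
      · intro j _ hj
        rw [hx', Function.update_of_ne hj]
        simp
      · intro h; exact absurd (Finset.mem_univ i) h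
    have hdist' : l1dist x' y = l1dist x y - 1 := by
      have key : ∑ j, (|x j - y j| - |x' j - y j|) = 1 := by
        rw [Finset.sum_eq_single i]
        · rw [hx', Function.update_self, hcoord]; ring
        · intro j _ hj
          rw [hx', Function.update_of_ne hj]; ring
        · intro h; exact absurd (Finset.mem_univ i) h
      rw [Finset.sum_sub_distrib] at key
      rw [l1dist, l1dist]
      linarith
    by_cases hx'Λ : x' ∈ Λ₀
    · have hd' : l1dist x' y ≤ (n : ℤ) := by
        push_neg at hle
        have : l1dist x y ≤ (n : ℤ) + 1 := by exact_mod_cast hn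
        omega
      obtain ⟨z, hz, hle'⟩ := ih x' hx'Λ y hy hd'
      refine ⟨z, hz, ?_⟩
      have htri := l1dist_triangle x x' z
      omega
    · refine ⟨x, ?_, ?_⟩
      · rw [latticeBoundary, Finset.mem_filter]
        exact ⟨hx, x', Finset.mem_sdiff.2 ⟨hx'box, hx'Λ⟩, hstep⟩
      · rw [l1dist_self]; omega

lemma geom_finset_le {q : ℝ} (hq0 : 0 ≤ q) (hq1 : q < 1) (s : Finset ℕ) :
    ∑ k ∈ s, q ^ k ≤ 1 / (1 - q) := by
  have hsub : s ⊆ Finset.range (s.sup id + 1) := by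
    intro k hk
    exact Finset.mem_range.2 (Nat.lt_succ_of_le (Finset.le_sup (f := id) hk))
  have h1 : ∑ k ∈ s, q ^ k ≤ ∑ k ∈ Finset.range (s.sup id + 1), q ^ k :=
    Finset.sum_le_sum_of_subset_of_nonneg hsub (fun k _ _ => pow_nonneg hq0 k)
  refine h1.trans ?_
  rw [geom_sum_eq (by linarith : q ≠ 1)]
  have hden : 0 < 1 - q := by linarith
  have : (q ^ (s.sup id + 1) - 1) / (q - 1) = (1 - q ^ (s.sup id + 1)) / (1 - q) := by
    rw [div_eq_div_iff (by linarith) (by linarith)]; ring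
  rw [this]
  exact (div_le_div_iff_of_pos_right hden).2 (by linarith [pow_nonneg hq0 (s.sup id + 1)])

lemma geom_finset_pos_le {q : ℝ} (hq0 : 0 ≤ q) (hq1 : q < 1) (s : Finset ℕ)
    (hs : ∀ k ∈ s, 1 ≤ k) :
    ∑ k ∈ s, q ^ k ≤ q / (1 - q) := by
  have himg : ∑ k ∈ s, q ^ k = ∑ j ∈ s.image (· - 1), q ^ (j + 1) := by
    rw [Finset.sum_image]
    · apply Finset.sum_congr rfl
      intro k hk
      have := hs k hk
      congr 1
      omega
    · intro k hk k' hk' h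
      have := hs k hk; have := hs k' hk'
      dsimp only at h
      omega
  rw [himg]
  have : ∑ j ∈ s.image (· - 1), q ^ (j + 1) = q * ∑ j ∈ s.image (· - 1), q ^ j := by
    rw [Finset.mul_sum]
    apply Finset.sum_congr rfl
    intro j _
    ring
  rw [this, div_eq_mul_one_div]
  exact mul_le_mul_of_nonneg_left (geom_finset_le hq0 hq1 _) hq0

lemma coord_bound {μ : ℝ} (hμ : 0 < μ) (a b c : ℤ) :
    ∑ t ∈ Finset.Icc a b, Real.exp (-μ * ((|t - c| : ℤ) : ℝ)) ≤
      (1 + Real.exp (-μ)) / (1 - Real.exp (-μ)) := by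
  set q := Real.exp (-μ) with hq
  have hq0 : 0 < q := Real.exp_pos _
  have hq1 : q < 1 := Real.exp_lt_one_iff.2 (by linarith)
  have hrw : ∀ t : ℤ, Real.exp (-μ * ((|t - c| : ℤ) : ℝ)) = q ^ (t - c).natAbs := by
    intro t
    rw [hq, ← Real.exp_nat_mul]
    congr 1
    have : ((|t - c| : ℤ) : ℝ) = ((t - c).natAbs : ℝ) := by
      rw [Nat.cast_natAbs]
    rw [this]; ring
  simp only [hrw]
  rw [← Finset.sum_filter_add_sum_filter_not (Finset.Icc a b) (fun t => c ≤ t)]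
  have h1 : ∑ t ∈ (Finset.Icc a b).filter (fun t => c ≤ t), q ^ (t - c).natAbs ≤
      1 / (1 - q) := by
    rw [Finset.sum_image (g := fun t => (t - c).natAbs) ?_ |>.symm]
    · exact geom_finset_le hq0.le hq1 _
    · intro t ht t' ht' h
      simp only [Finset.mem_coe, Finset.mem_filter, Finset.mem_Icc] at ht ht'
      have h' : (t - c).natAbs = (t' - c).natAbs := h
      omega
  have h2 : ∑ t ∈ (Finset.Icc a b).filter (fun t => ¬ c ≤ t), q ^ (t - c).natAbs ≤
      q / (1 - q) := by
    rw [Finset.sum_image (g := fun t => (t - c).natAbs) ?_ |>.symm]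
    · apply geom_finset_pos_le hq0.le hq1
      intro k hk
      simp only [Finset.mem_image, Finset.mem_filter, Finset.mem_Icc] at hk
      obtain ⟨t, ⟨_, ht⟩, rfl⟩ := hk
      omega
    · intro t ht t' ht' h
      simp only [Finset.mem_coe, Finset.mem_filter, Finset.mem_Icc] at ht ht'
      have h' : (t - c).natAbs = (t' - c).natAbs := h
      omega
  have : (1 + q) / (1 - q) = 1 / (1 - q) + q / (1 - q) := by ring
  rw [this]
  exact add_le_add h1 h2

lemma site_bound {d : ℕ} (a b : ℤ) {μ : ℝ} (hμ : 0 < μ) (z : Fin d → ℤ) :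
    ∑ x ∈ latticeBox d a b, Real.exp (-μ * (l1dist x z : ℝ)) ≤
      ((1 + Real.exp (-μ)) / (1 - Real.exp (-μ))) ^ d := by
  have hterm : ∀ x : Fin d → ℤ, Real.exp (-μ * (l1dist x z : ℝ)) =
      ∏ i, Real.exp (-μ * ((|x i - z i| : ℤ) : ℝ)) := by
    intro x
    rw [← Real.exp_sum]
    congr 1
    rw [l1dist]
    push_cast
    rw [Finset.mul_sum]
  simp only [hterm]
  have hps := Finset.prod_univ_sum (fun _ : Fin d => Finset.Icc a b)
    (fun i t => Real.exp (-μ * ((|t - z i| : ℤ) : ℝ)))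
  rw [latticeBox, ← hps]
  have hD1 : 0 < 1 - Real.exp (-μ) := by
    have : Real.exp (-μ) < 1 := Real.exp_lt_one_iff.2 (by linarith)
    linarith
  have hpc : ∏ _i : Fin d, ((1 + Real.exp (-μ)) / (1 - Real.exp (-μ))) =
      ((1 + Real.exp (-μ)) / (1 - Real.exp (-μ))) ^ d := by
    simp [div_pow]
  rw [← hpc]
  apply Finset.prod_le_prod
  · intro i _
    exact Finset.sum_nonneg fun t _ => (Real.exp_pos _).le
  · intro i _
    exact coord_bound hμ a b (z i)

/-- Area-law type bound:
`∑_{x ∈ Λ₀} ∑_{y ∈ Λ∖Λ₀} e^{−μ|x−y|} ≤ |∂Λ₀| ((1+e^{−μ})/(1−e^{−μ}))^{2d}`. -/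
theorem exp_decay_double_sum_area_bound (d : ℕ) (hd : 1 ≤ d) (a b : ℤ) (hab : a < b)
    (μ : ℝ) (hμ : 0 < μ) (Λ₀ : Finset (Fin d → ℤ)) (hΛ₀ : Λ₀ ⊆ latticeBox d a b) :
    ∑ x ∈ Λ₀, ∑ y ∈ latticeBox d a b \ Λ₀, Real.exp (-μ * (l1dist x y : ℝ)) ≤
      ((latticeBoundary d a b Λ₀).card : ℝ) *
        ((1 + Real.exp (-μ)) / (1 - Real.exp (-μ))) ^ (2 * d) := by
  classical
  set q := Real.exp (-μ) with hq
  set D := (1 + q) / (1 - q) with hD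
  set s : Finset ((Fin d → ℤ) × (Fin d → ℤ)) := Λ₀ ×ˢ (latticeBox d a b \ Λ₀) with hs
  -- the boundary point associated to a pair
  have key : ∀ p ∈ s, ∃ z ∈ latticeBoundary d a b Λ₀,
      l1dist p.1 z + l1dist z p.2 ≤ l1dist p.1 p.2 := by
    intro p hp
    rw [hs, Finset.mem_product] at hp
    exact exists_boundary hΛ₀ (l1dist p.1 p.2).natAbs p.1 hp.1 p.2 hp.2
      (by rw [Int.natAbs_of_nonneg (l1dist_nonneg _ _)])
  set g : ((Fin d → ℤ) × (Fin d → ℤ)) → (Fin d → ℤ) := fun p =>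
    if h : p ∈ s then (key p h).choose else fun _ => 0 with hg
  have hgmem : ∀ p ∈ s, g p ∈ latticeBoundary d a b Λ₀ := by
    intro p hp
    rw [hg]
    simp only [dif_pos hp]
    exact (key p hp).choose_spec.1
  have hgdist : ∀ p ∈ s, l1dist p.1 (g p) + l1dist (g p) p.2 ≤ l1dist p.1 p.2 := by
    intro p hp
    rw [hg]
    simp only [dif_pos hp]
    exact (key p hp).choose_spec.2
  -- rewrite double sum as sum over pairs
  rw [← Finset.sum_product' (s := Λ₀) (t := latticeBox d a b \ Λ₀)
    (f := fun x y => Real.exp (-μ * (l1dist x y : ℝ)))]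
  rw [← Finset.sum_fiberwise_of_maps_to hgmem
    (fun p => Real.exp (-μ * (l1dist p.1 p.2 : ℝ)))]
  -- bound each fiber
  have hfiber : ∀ z ∈ latticeBoundary d a b Λ₀,
      ∑ p ∈ s.filter (fun p => g p = z), Real.exp (-μ * (l1dist p.1 p.2 : ℝ)) ≤
        D ^ (2 * d) := by
    intro z hz
    have h1 : ∑ p ∈ s.filter (fun p => g p = z), Real.exp (-μ * (l1dist p.1 p.2 : ℝ)) ≤
        ∑ p ∈ s.filter (fun p => g p = z),
          Real.exp (-μ * (l1dist p.1 z : ℝ)) * Real.exp (-μ * (l1dist z p.2 : ℝ)) := by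
      apply Finset.sum_le_sum
      intro p hp
      rw [Finset.mem_filter] at hp
      obtain ⟨hps, hpz⟩ := hp
      rw [← Real.exp_add]
      apply Real.exp_le_exp.2
      have := hgdist p hps
      rw [hpz] at this
      have hcast : (l1dist p.1 z : ℝ) + (l1dist z p.2 : ℝ) ≤ (l1dist p.1 p.2 : ℝ) := by
        exact_mod_cast this
      nlinarith
    refine h1.trans ?_
    have h2 : ∑ p ∈ s.filter (fun p => g p = z),
          Real.exp (-μ * (l1dist p.1 z : ℝ)) * Real.exp (-μ * (l1dist z p.2 : ℝ)) ≤
        ∑ p ∈ (latticeBox d a b) ×ˢ (latticeBox d a b),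
          Real.exp (-μ * (l1dist p.1 z : ℝ)) * Real.exp (-μ * (l1dist z p.2 : ℝ)) := by
      apply Finset.sum_le_sum_of_subset_of_nonneg
      · intro p hp
        rw [Finset.mem_filter] at hp
        have := hp.1
        rw [hs, Finset.mem_product] at this
        rw [Finset.mem_product]
        exact ⟨hΛ₀ this.1, (Finset.mem_sdiff.1 this.2).1⟩
      · intro p _ _
        positivity
    refine h2.trans ?_
    rw [Finset.sum_product]
    dsimp only
    rw [← Finset.sum_mul_sum]
    have hxs : ∑ x ∈ latticeBox d a b, Real.exp (-μ * (l1dist x z : ℝ)) ≤ D ^ d :=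
      site_bound a b hμ z
    have hys : ∑ y ∈ latticeBox d a b, Real.exp (-μ * (l1dist z y : ℝ)) ≤ D ^ d := by
      have : ∀ y : Fin d → ℤ, l1dist z y = l1dist y z := fun y => l1dist_comm z y
      simp only [this]
      exact site_bound a b hμ z
    have hpos : (0:ℝ) ≤ ∑ x ∈ latticeBox d a b, Real.exp (-μ * (l1dist x z : ℝ)) :=
      Finset.sum_nonneg fun _ _ => (Real.exp_pos _).le
    have hDd : (0:ℝ) ≤ D ^ d := by
      have hq1 : q < 1 := Real.exp_lt_one_iff.2 (by linarith)
      have hq0 : 0 < q := Real.exp_pos _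
      have hDnn : 0 ≤ D := div_nonneg (by linarith) (by linarith)
      exact pow_nonneg hDnn d
    calc (∑ x ∈ latticeBox d a b, Real.exp (-μ * (l1dist x z : ℝ))) *
          ∑ y ∈ latticeBox d a b, Real.exp (-μ * (l1dist z y : ℝ)) ≤ D ^ d * D ^ d := by
          apply mul_le_mul hxs hys (Finset.sum_nonneg fun _ _ => (Real.exp_pos _).le) hDd
      _ = D ^ (2 * d) := by rw [← pow_add]; ring_nf
  calc ∑ z ∈ latticeBoundary d a b Λ₀, ∑ p ∈ s.filter (fun p => g p = z),
        Real.exp (-μ * (l1dist p.1 p.2 : ℝ))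
      ≤ ∑ _z ∈ latticeBoundary d a b Λ₀, D ^ (2 * d) := Finset.sum_le_sum hfiber
    _ = ((latticeBoundary d a b Λ₀).card : ℝ) * D ^ (2 * d) := by
        rw [Finset.sum_const, nsmul_eq_mul]
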